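/- arXiv:2206.05407 — 2 statements merged into one kernel-verified Lean document; each statement's English description precedes it below -/
import Mathlib

section
/- Let λ > 0, Q < 0 with λ + Q > 0, M > 0, and suppose bλe^{QM} = bλ + Q with a + b = 1. If g₂(x) = k e^{Qx} with k = -Q/(M(bλ+Q)), then for all x ≥ M: k e^{Qx} = λe^{-λx}∫₀^M e^{λμ} g₁(μ) dμ - kλe^{QM - λx}(a e^{λM} + b)/(λ+Q) + λ(a + b e^{QM}) k e^{Qx}/(λ+Q), where g₁(μ) = (1 - e^{Qμ})/M. -/
open Real intervalIntegral

lemma int_exp_aux (c b : ℝ) (hc : c ≠ 0) :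
    ∫ x in (0:ℝ)..b, Real.exp (c*x) = (Real.exp (c*b) - 1)/c := by
  rw [intervalIntegral.integral_comp_mul_left (fun x => Real.exp x) hc]
  simp [mul_comm]; ring

/-- the exponential ansatz `g₂(x) = k e^{Qx}` with
`k = -Q/(M(bλ+Q))` satisfies the fixed-point integral identity for the
tail `x ≥ M` of the stationary energy density. -/
theorem stmt_6 (lam Q M a b k : ℝ) (hlam : 0 < lam) (hQ : Q < 0)
    (hlQ : 0 < lam + Q) (hM : 0 < M)
    (hfix : b * lam * Real.exp (Q * M) = b * lam + Q)
    (hab : a + b = 1)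
    (hk : k = -Q / (M * (b * lam + Q)))
    (g₁ : ℝ → ℝ) (hg₁ : ∀ μ, g₁ μ = (1 - Real.exp (Q * μ)) / M) :
    ∀ x, M ≤ x →
      k * Real.exp (Q * x) =
        lam * Real.exp (-lam * x) * (∫ μ in (0 : ℝ)..M, Real.exp (lam * μ) * g₁ μ)
          - k * lam * Real.exp (Q * M - lam * x) * (a * Real.exp (lam * M) + b) / (lam + Q)
          + lam * (a + b * Real.exp (Q * M)) * k * Real.exp (Q * x) / (lam + Q) := by
  intro x hx
  have hbQ : b * lam + Q ≠ 0 := by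
    intro h
    have hb0 : b * lam * Real.exp (Q * M) = 0 := by rw [hfix, h]
    rcases mul_eq_zero.1 hb0 with h1 | h2
    · rcases mul_eq_zero.1 h1 with h3 | h4
      · rw [h3] at h; simp at h; linarith
      · exact absurd h4 hlam.ne'
    · exact absurd h2 (Real.exp_ne_zero _)
  set G := Real.exp (Q * M) with hG
  set H := Real.exp (lam * M) with hH
  have hI : (∫ μ in (0 : ℝ)..M, Real.exp (lam * μ) * g₁ μ)
      = ((H - 1)/lam - (H*G - 1)/(lam+Q)) / M := by
    have h1 : (∫ μ in (0 : ℝ)..M, Real.exp (lam * μ) * g₁ μ)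
        = (∫ μ in (0 : ℝ)..M, (Real.exp (lam * μ) - Real.exp ((lam+Q) * μ)))/M := by
      rw [← intervalIntegral.integral_div]
      apply intervalIntegral.integral_congr
      intro μ _
      simp only
      rw [hg₁ μ, show (lam+Q)*μ = lam*μ + Q*μ by ring, Real.exp_add]
      ring
    have hHG : Real.exp ((lam+Q)*M) = H * G := by
      rw [hH, hG, ← Real.exp_add]; ring_nf
    rw [h1, intervalIntegral.integral_sub
        (Continuous.intervalIntegrable (by continuity) _ _)
        (Continuous.intervalIntegrable (by continuity) _ _),
      int_exp_aux lam M hlam.ne', int_exp_aux (lam+Q) M hlQ.ne', hHG]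
  rw [hI]
  have hB : ((H - 1)/lam - (H*G - 1)/(lam+Q)) / M = k * G * (a*H + b) / (lam+Q) := by
    rw [hk]
    have hbQ' : lam * b + Q ≠ 0 := by rwa [mul_comm lam b]
    field_simp
    linear_combination (Q - H*lam - H*Q)*hfix + H*G*lam*Q*hab
  have hA : lam * (a + b * G) = lam + Q := by
    linear_combination hfix + lam * hab
  rw [hB]
  have h2 : Real.exp (Q*M - lam*x) = G * (Real.exp (lam*x))⁻¹ := by
    rw [Real.exp_sub, hG]; ring
  have h3 : Real.exp (-lam * x) = (Real.exp (lam * x))⁻¹ := by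
    rw [← Real.exp_neg]; ring_nf
  rw [h2, h3]
  have e1 := Real.exp_ne_zero (lam*x)
  field_simp
  linear_combination (-(k * Real.exp (Q*x) * Real.exp (x*lam))) * hA
end

section
/- Let a, b > 0 with a + b = 1, λ, M > 0, and Q < 0 with λ + Q > 0 satisfying bλe^{QM} = bλ + Q. Then (1 - e^{(λ+Q)M})/((λ+Q)M) - (1 - e^{λM})/(λM) = (1 - e^{QM})(b + a e^{λM})/((λ+Q)M). -/
open Real

/-- algebraic identity verifying condition (B13b) of the
stationary-distribution proof. -/
theorem stmt_8 (a b lam M Q : ℝ) (ha : 0 < a) (hb : 0 < b) (hab : a + b = 1)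
    (hlam : 0 < lam) (hM : 0 < M) (hQ : Q < 0) (hlQ : 0 < lam + Q)
    (hfix : b * lam * Real.exp (Q * M) = b * lam + Q) :
    (1 - Real.exp ((lam + Q) * M)) / ((lam + Q) * M)
        - (1 - Real.exp (lam * M)) / (lam * M) =
      (1 - Real.exp (Q * M)) * (b + a * Real.exp (lam * M)) / ((lam + Q) * M) := by
  have hexp : Real.exp ((lam + Q) * M) = Real.exp (lam * M) * Real.exp (Q * M) := by
    rw [← Real.exp_add, ← add_mul]
  rw [hexp]
  have h1 : (lam + Q) * M ≠ 0 := by positivity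
  have h2 : lam * M ≠ 0 := by positivity
  field_simp
  rw [mul_comm M Q]
  linear_combination (1 - Real.exp (lam * M)) * hfix
    - (lam * Real.exp (lam * M) * (1 - Real.exp (Q * M))) * hab
end
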